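/- Let k ≥ 2 be an integer, let c_i = k^{i−1} for 1 ≤ i ≤ k−1 and c_k = −∑_{i=1}^{k−1} k^{i−1}, let p be a prime with p > (k+1)·k^{k−1}, set q_i = (p + c_i)/(kp) for 1 ≤ i ≤ k, and let H be the additive submonoid of ℚ_{≥0} generated by q_1, …, q_k. Then the set of atoms of H is exactly {q_1, …, q_k}; moreover, if l_1, …, l_k are nonnegative integers with ∑_{i=1}^k l_i·q_i = 1, then l_1 = … = l_k = 1. In particular, the element 1 ∈ H has the unique factorization q_1 + … + q_k, and its set of lengths in H is {k}. -/

import Mathlib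

lemma stmt7_key (k a b u v : ℕ) (heq : a * k + u = b * k + v) (huv : u + v ≤ k) :
    (a = b ∧ u = v) ∨ (a < b ∧ u = k ∧ v = 0) ∨ (b < a ∧ v = k ∧ u = 0) := by
  rcases Nat.lt_trichotomy a b with h | h | h
  · refine Or.inr (Or.inl ⟨h, ?_⟩)
    have h1 : a * k + k ≤ b * k := by
      calc a * k + k = (a + 1) * k := by ring
        _ ≤ b * k := Nat.mul_le_mul_right k h
    obtain ⟨X, hX⟩ : ∃ X, a * k = X := ⟨_, rfl⟩
    obtain ⟨Y, hY⟩ : ∃ Y, b * k = Y := ⟨_, rfl⟩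
    rw [hX, hY] at heq h1
    omega
  · subst h
    obtain ⟨X, hX⟩ : ∃ X, a * k = X := ⟨_, rfl⟩
    rw [hX] at heq
    omega
  · refine Or.inr (Or.inr ⟨h, ?_⟩)
    have h1 : b * k + k ≤ a * k := by
      calc b * k + k = (b + 1) * k := by ring
        _ ≤ a * k := Nat.mul_le_mul_right k h
    obtain ⟨X, hX⟩ : ∃ X, a * k = X := ⟨_, rfl⟩
    obtain ⟨Y, hY⟩ : ∃ Y, b * k = Y := ⟨_, rfl⟩
    rw [hX, hY] at heq h1
    omega

/-- Base-k digit uniqueness with a global size constraint. -/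
lemma stmt7_baseK (k : ℕ) :
    ∀ (n : ℕ) (l : ℕ → ℕ) (t : ℕ),
      (∑ i ∈ Finset.range n, l i) + t ≤ k →
      (∑ i ∈ Finset.range n, l i * k ^ i) = t * (∑ i ∈ Finset.range n, k ^ i) →
      ∀ i < n, l i = t := by
  intro n
  induction n with
  | zero => intro l t _ _ i hi; omega
  | succ n ih =>
    intro l t hsum heq i hi
    have h1 : (∑ i ∈ Finset.range (n+1), l i * k ^ i)
        = (∑ i ∈ Finset.range n, l (i + 1) * k ^ i) * k + l 0 := by
      rw [Finset.sum_range_succ']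
      simp only [pow_zero, mul_one, pow_succ, ← mul_assoc]
      rw [← Finset.sum_mul]
    have h2 : (∑ i ∈ Finset.range (n+1), k ^ i)
        = (∑ i ∈ Finset.range n, k ^ i) * k + 1 := by
      rw [Finset.sum_range_succ']
      simp only [pow_zero, pow_succ]
      rw [← Finset.sum_mul]
    have hl0 : l 0 + t ≤ k := by
      have : l 0 ≤ ∑ i ∈ Finset.range (n+1), l i :=
        Finset.single_le_sum (f := l) (fun i _ => Nat.zero_le _)
          (Finset.mem_range.mpr (Nat.succ_pos n))
      omega
    have hsum' : (∑ i ∈ Finset.range n, l (i + 1)) + t ≤ k := by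
      have : (∑ i ∈ Finset.range (n+1), l i) = (∑ i ∈ Finset.range n, l (i+1)) + l 0 :=
        Finset.sum_range_succ' l n
      omega
    rw [h1, h2, Nat.mul_add, mul_one, ← mul_assoc] at heq
    rcases stmt7_key k _ _ _ _ heq hl0 with ⟨hAB, hl0t⟩ | ⟨hlt, hu, hv⟩ | ⟨hlt, hv, hu⟩
    · have hred : (∑ i ∈ Finset.range n, (fun i => l (i+1)) i * k ^ i)
          = t * (∑ i ∈ Finset.range n, k ^ i) := hAB
      have := ih (fun i => l (i + 1)) t hsum' hred
      rcases i with _ | j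
      · exact hl0t
      · exact this j (by omega)
    · rw [hv, Nat.zero_mul] at hlt
      omega
    · have hz : ∀ j ∈ Finset.range n, l (j + 1) = 0 := by
        intro j hj
        have hle : l (j+1) ≤ ∑ i ∈ Finset.range n, l (i+1) :=
          Finset.single_le_sum (f := fun i => l (i+1)) (fun i _ => Nat.zero_le _) hj
        omega
      have hA0 : (∑ i ∈ Finset.range n, l (i + 1) * k ^ i) = 0 :=
        Finset.sum_eq_zero (fun j hj => by rw [hz j hj, Nat.zero_mul])
      rw [hA0] at hlt
      omega

lemma stmt7_sum_bounds {k : ℕ} (N : Fin k → ℤ) (a b : ℤ)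
    (hlo : ∀ i, a ≤ N i) (hhi : ∀ i, N i ≤ b) (m : Fin k → ℕ) :
    ((∑ i, m i : ℕ) : ℤ) * a ≤ ∑ i, (m i : ℤ) * N i ∧
    (∑ i, (m i : ℤ) * N i) ≤ ((∑ i, m i : ℕ) : ℤ) * b := by
  have hcast : ((∑ i, m i : ℕ) : ℤ) = ∑ i, (m i : ℤ) := by push_cast; rfl
  constructor
  · rw [hcast, Finset.sum_mul]
    exact Finset.sum_le_sum fun i _ =>
      mul_le_mul_of_nonneg_left (hlo i) (by positivity)
  · rw [hcast, Finset.sum_mul]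
    exact Finset.sum_le_sum fun i _ =>
      mul_le_mul_of_nonneg_left (hhi i) (by positivity)

lemma stmt7_mem {k : ℕ} (q : Fin k → ℚ) (x : ℚ) :
    x ∈ AddSubmonoid.closure (Set.range q) ↔ ∃ m : Fin k → ℕ, ∑ i, (m i : ℚ) * q i = x := by
  constructor
  · intro hx
    induction hx using AddSubmonoid.closure_induction with
    | mem y hy =>
      obtain ⟨i, rfl⟩ := hy
      exact ⟨fun j => if j = i then 1 else 0, by simp⟩
    | zero => exact ⟨0, by simp⟩
    | add x y _ _ hx hy =>
      obtain ⟨m, hm⟩ := hx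
      obtain ⟨m', hm'⟩ := hy
      refine ⟨m + m', ?_⟩
      rw [← hm, ← hm', ← Finset.sum_add_distrib]
      refine Finset.sum_congr rfl fun i _ => ?_
      simp only [Pi.add_apply]
      push_cast
      ring
  · rintro ⟨m, rfl⟩
    refine AddSubmonoid.sum_mem _ fun i _ => ?_
    rw [show ((m i : ℚ)) * q i = m i • q i by simp [nsmul_eq_mul]]
    exact (AddSubmonoid.closure _).nsmul_mem (AddSubmonoid.subset_closure (Set.mem_range_self i)) (m i)

lemma stmt7_exists_map {α β : Type*} (f : α → β) (z : Multiset β)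
    (h : ∀ x ∈ z, ∃ a, f a = x) : ∃ w : Multiset α, z = w.map f := by
  induction z using Multiset.induction with
  | empty => exact ⟨0, rfl⟩
  | cons x s ih =>
    obtain ⟨w, rfl⟩ := ih fun y hy => h y (Multiset.mem_cons_of_mem hy)
    obtain ⟨a, rfl⟩ := h x (Multiset.mem_cons_self x _)
    exact ⟨a ::ₘ w, (Multiset.map_cons f a w).symm⟩

lemma stmt7_map_sum {k : ℕ} (q : Fin k → ℚ) (w : Multiset (Fin k)) :
    (w.map q).sum = ∑ i, (w.count i : ℚ) * q i := by
  induction w using Multiset.induction with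
  | empty => simp
  | cons a s ih =>
    rw [Multiset.map_cons, Multiset.sum_cons, ih]
    rw [show ∑ i, ((a ::ₘ s).count i : ℚ) * q i
        = ∑ i, ((if i = a then 1 else 0) + (s.count i : ℚ)) * q i from
      Finset.sum_congr rfl fun i _ => by rw [Multiset.count_cons]; push_cast; ring]
    simp only [add_mul, Finset.sum_add_distrib, ite_mul, one_mul, zero_mul]
    rw [Finset.sum_ite_eq' Finset.univ a q]
    simp

/-- `u` is an atom of the additive submonoid `H` of `ℚ`: it is a nonzero element of `H`
that is not the sum of two nonzero elements of `H`. -/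
def IsAtomOf (H : AddSubmonoid ℚ) (u : ℚ) : Prop :=
  u ∈ H ∧ u ≠ 0 ∧ ∀ v ∈ H, ∀ w ∈ H, v ≠ 0 → w ≠ 0 → u ≠ v + w

/-- `z` is a factorization of `a` in `H`: a multiset of atoms of `H` with sum `a`. -/
def IsFactorizationOf (H : AddSubmonoid ℚ) (a : ℚ) (z : Multiset ℚ) : Prop :=
  (∀ x ∈ z, IsAtomOf H x) ∧ z.sum = a

set_option maxHeartbeats 2000000 in
/-- With `k ≥ 2`, the explicit integers `c i = k^i` (for `i + 1 < k`,
indexing from `0`) and `c (k-1) = -∑_{j<k-1} k^j`, a prime `p > (k+1)·k^(k-1)`,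
`q i = (p + c i)/(k·p)`, and `H` the additive submonoid of `ℚ_{≥0}` generated by the
`q i`: the atoms of `H` are exactly the `q i`; any nonnegative integers `l i` with
`∑ l i · q i = 1` satisfy `l i = 1` for all `i`; `1` has the unique factorization
`q 1 + … + q k` in `H`; and the set of lengths of `1` in `H` is `{k}`. -/
theorem stmt7 (k : ℕ) (hk : 2 ≤ k) (p : ℕ) (hp : p.Prime)
    (hpk : ((k : ℤ) + 1) * (k : ℤ) ^ (k - 1) < (p : ℤ))
    (c : Fin k → ℤ)
    (hc : ∀ i : Fin k, c i =
      if (i : ℕ) + 1 < k then (k : ℤ) ^ (i : ℕ)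
      else -(∑ j ∈ Finset.range (k - 1), (k : ℤ) ^ j))
    (q : Fin k → ℚ) (hq : ∀ i, q i = ((p : ℚ) + (c i : ℚ)) / ((k : ℚ) * (p : ℚ)))
    (H : AddSubmonoid ℚ) (hH : H = AddSubmonoid.closure (Set.range q)) :
    ({u | IsAtomOf H u} = Set.range q) ∧
    (∀ l : Fin k → ℕ, (∑ i, (l i : ℚ) * q i) = 1 → ∀ i, l i = 1) ∧
    (∀ z, IsFactorizationOf H 1 z ↔ z = Multiset.map q Finset.univ.val) ∧
    ({n | ∃ z, IsFactorizationOf H 1 z ∧ Multiset.card z = n} = {k}) := by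
  subst hH
  obtain ⟨n, rfl⟩ : ∃ n, k = n + 1 := ⟨k - 1, by omega⟩
  simp only [Nat.add_sub_cancel] at hpk hc
  have hn : 1 ≤ n := by omega
  have hp0 : (0 : ℤ) < (p : ℤ) := by exact_mod_cast hp.pos
  set K : ℤ := ((n + 1 : ℕ) : ℤ) with hK
  set B : ℤ := K ^ n with hB
  have hK2 : (2 : ℤ) ≤ K := by rw [hK]; exact_mod_cast hk
  have hB0 : (0 : ℤ) < B := by rw [hB]; positivity
  have hS_lt : (∑ j ∈ Finset.range n, K ^ j) < B := by
    have hgs : (∑ j ∈ Finset.range n, K ^ j) * (K - 1) = K ^ n - 1 := geom_sum_mul K n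
    have hSnn : 0 ≤ ∑ j ∈ Finset.range n, K ^ j :=
      Finset.sum_nonneg fun j _ => by positivity
    nlinarith [hgs, hSnn]
  have hS_pos : (1 : ℤ) ≤ ∑ j ∈ Finset.range n, K ^ j := by
    calc (1 : ℤ) = K ^ 0 := by ring
      _ ≤ ∑ j ∈ Finset.range n, K ^ j :=
        Finset.single_le_sum (f := fun j => K ^ j) (fun j _ => by positivity)
          (Finset.mem_range.mpr hn)
  have hcub : ∀ i, c i < B := by
    intro i
    rw [hc i]
    split_ifs with h
    · rw [hB]
      exact pow_lt_pow_right₀ (by linarith) (by omega)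
    · linarith
  have hclb : ∀ i, -B < c i := by
    intro i
    rw [hc i]
    split_ifs with h
    · have : (0 : ℤ) < K ^ (i : ℕ) := by positivity
      linarith
    · linarith
  have hpB : B < (p : ℤ) := by
    have h1 : (0 : ℤ) ≤ K * B := by positivity
    have h2 : (K + 1) * B < (p : ℤ) := hpk
    nlinarith
  have hpmB : (0 : ℤ) < (p : ℤ) - B := by linarith
  have hNpos : ∀ i, (0 : ℤ) < (p : ℤ) + c i := fun i => by have := hclb i; linarith
  have hqp : (0 : ℚ) < ((p : ℚ)) := by exact_mod_cast hp.pos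
  have hD : ((n + 1 : ℕ) : ℚ) * (p : ℚ) ≠ 0 := by positivity
  have hq_pos : ∀ i, 0 < q i := by
    intro i
    rw [hq i]
    apply div_pos
    · have := hNpos i
      push_cast
      exact_mod_cast this
    · positivity
  -- value of a generic combination
  have hval : ∀ m : Fin (n + 1) → ℕ,
      ∑ i, (m i : ℚ) * q i
        = ((∑ i, (m i : ℤ) * ((p : ℤ) + c i) : ℤ) : ℚ) / (((n + 1 : ℕ) : ℚ) * (p : ℚ)) := by
    intro m
    push_cast
    rw [Finset.sum_div]
    refine Finset.sum_congr rfl fun i _ => ?_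
    rw [hq i]
    push_cast
    ring
  have hclear : ∀ (m : Fin (n + 1) → ℕ) (x : ℤ),
      (∑ i, (m i : ℚ) * q i) = (x : ℚ) / (((n + 1 : ℕ) : ℚ) * (p : ℚ)) →
      ∑ i, (m i : ℤ) * ((p : ℤ) + c i) = x := by
    intro m x h
    rw [hval m] at h
    have h2 := (div_left_inj' hD).mp h
    exact_mod_cast h2
  have hcsum : ∑ i, c i = 0 := by
    rw [Fin.sum_univ_castSucc]
    have h1 : ∀ i : Fin n, c i.castSucc = K ^ (i : ℕ) := by
      intro i
      rw [hc, if_pos (by have := i.isLt; simp only [Fin.coe_castSucc]; omega), Fin.coe_castSucc]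
    have h2 : c (Fin.last n) = -(∑ j ∈ Finset.range n, K ^ j) := by
      rw [hc, if_neg (by simp [Fin.val_last])]
    rw [h2, Finset.sum_congr rfl fun i _ => h1 i]
    rw [Fin.sum_univ_eq_sum_range (fun j => K ^ j) n]
    ring
  have hNsum : ∑ i : Fin (n + 1), ((p : ℤ) + c i) = K * (p : ℤ) := by
    rw [Finset.sum_add_distrib, hcsum, add_zero, Finset.sum_const, Finset.card_univ,
      Fintype.card_fin]
    simp [hK, mul_comm]
  have hqsum : ∑ i, q i = 1 := by
    have h1 := hval (fun _ => 1)
    simp only [Nat.cast_one, one_mul] at h1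
    rw [h1, hNsum, hK]
    push_cast
    field_simp
  -- the key uniqueness statement
  have key2 : ∀ l : Fin (n + 1) → ℕ, (∑ i, (l i : ℚ) * q i) = 1 → ∀ i, l i = 1 := by
    intro l hl
    have hone : (1 : ℚ) = ((K * (p : ℤ) : ℤ) : ℚ) / (((n + 1 : ℕ) : ℚ) * (p : ℚ)) := by
      rw [hK]; push_cast; field_simp
    have h1 : ∑ i, (l i : ℤ) * ((p : ℤ) + c i) = K * (p : ℤ) :=
      hclear l _ (by rw [hl, hone])
    have hbounds := stmt7_sum_bounds (fun i => (p : ℤ) + c i) ((p : ℤ) - B) ((p : ℤ) + B)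
      (fun i => by have := hclb i; linarith)
      (fun i => by have := hcub i; linarith) l
    rw [h1] at hbounds
    obtain ⟨hlow, hhigh⟩ := hbounds
    set L : ℕ := ∑ i, l i with hL
    -- L = n + 1
    have hLk : L = n + 1 := by
      have hub : ¬ (L ≤ n) := by
        intro hLn
        have h3 : (L : ℤ) ≤ (n : ℤ) := by exact_mod_cast hLn
        have h4 : (L : ℤ) * ((p : ℤ) + B) ≤ (n : ℤ) * ((p : ℤ) + B) :=
          mul_le_mul_of_nonneg_right h3 (by linarith)
        have h5 : K * (p : ℤ) ≤ (n : ℤ) * ((p : ℤ) + B) := le_trans hhigh h4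
        have hKn : K = (n : ℤ) + 1 := by rw [hK]; push_cast; ring
        nlinarith [hpk, hB0, hp0]
      have hlb : ¬ (n + 2 ≤ L) := by
        intro hLn
        have h3 : ((n : ℤ) + 2) ≤ (L : ℤ) := by exact_mod_cast hLn
        have h4 : ((n : ℤ) + 2) * ((p : ℤ) - B) ≤ (L : ℤ) * ((p : ℤ) - B) :=
          mul_le_mul_of_nonneg_right h3 (by linarith)
        have h5 : ((n : ℤ) + 2) * ((p : ℤ) - B) ≤ K * (p : ℤ) := le_trans h4 hlow
        have hKn : K = (n : ℤ) + 1 := by rw [hK]; push_cast; ring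
        nlinarith [hpk, hB0, hp0]
      omega
    -- ∑ l i * c i = 0
    have hLcast : ((L : ℕ) : ℤ) = ∑ i, (l i : ℤ) := by rw [hL]; push_cast; rfl
    have hexp : ∑ i, (l i : ℤ) * ((p : ℤ) + c i)
        = (L : ℤ) * (p : ℤ) + ∑ i, (l i : ℤ) * c i := by
      rw [hLcast, Finset.sum_mul, ← Finset.sum_add_distrib]
      exact Finset.sum_congr rfl fun i _ => by ring
    have hLK : (L : ℤ) = K := by rw [hLk, hK]
    have hsum0 : ∑ i, (l i : ℤ) * c i = 0 := by
      rw [hexp, hLK] at h1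
      linarith
    -- split off the last coordinate
    set l' : ℕ → ℕ := fun j => if h : j < n then l (Fin.castSucc ⟨j, h⟩) else 0 with hl'
    set t : ℕ := l (Fin.last n) with ht
    have hl'eq : ∀ i : Fin n, l' (i : ℕ) = l i.castSucc := by
      intro i
      rw [hl']
      simp [i.isLt]
    have hcs : ∀ i : Fin n, c i.castSucc = K ^ (i : ℕ) := by
      intro i
      rw [hc, if_pos (by have := i.isLt; simp only [Fin.coe_castSucc]; omega), Fin.coe_castSucc]
    have hcl : c (Fin.last n) = -(∑ j ∈ Finset.range n, K ^ j) := by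
      rw [hc, if_neg (by simp [Fin.val_last])]
    have hsplit : (∑ j ∈ Finset.range n, (l' j : ℤ) * K ^ j)
        = (t : ℤ) * (∑ j ∈ Finset.range n, K ^ j) := by
      have e1 : (0 : ℤ)
          = (∑ i : Fin n, (l i.castSucc : ℤ) * c i.castSucc) + (t : ℤ) * c (Fin.last n) := by
        rw [← hsum0]
        exact Fin.sum_univ_castSucc (fun i => (l i : ℤ) * c i)
      have e3 : ∑ i : Fin n, (l i.castSucc : ℤ) * c i.castSucc
          = ∑ i : Fin n, (l i.castSucc : ℤ) * K ^ (i : ℕ) :=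
        Finset.sum_congr rfl fun i _ => by rw [hcs i]
      have e2 : ∑ j ∈ Finset.range n, (l' j : ℤ) * K ^ j
          = ∑ i : Fin n, (l i.castSucc : ℤ) * K ^ (i : ℕ) := by
        rw [← Fin.sum_univ_eq_sum_range (fun j => (l' j : ℤ) * K ^ j) n]
        exact Finset.sum_congr rfl fun i _ => by rw [hl'eq i]
      rw [e3, hcl] at e1
      rw [e2]
      linarith
    have hsplitN : (∑ j ∈ Finset.range n, l' j * (n + 1) ^ j)
        = t * (∑ j ∈ Finset.range n, (n + 1) ^ j) := by
      have h' := hsplit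
      rw [hK] at h'
      have : ((∑ j ∈ Finset.range n, l' j * (n + 1) ^ j : ℕ) : ℤ)
          = ((t * (∑ j ∈ Finset.range n, (n + 1) ^ j) : ℕ) : ℤ) := by
        push_cast
        convert h' using 2 <;> push_cast <;> ring
      exact_mod_cast this
    have hsumcs : ∑ j ∈ Finset.range n, l' j = ∑ i : Fin n, l i.castSucc := by
      rw [← Fin.sum_univ_eq_sum_range (fun j => l' j) n]
      exact Finset.sum_congr rfl fun i _ => hl'eq i
    have hLtot : (∑ i : Fin n, l i.castSucc) + t = n + 1 := by
      rw [← hLk, hL]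
      exact (Fin.sum_univ_castSucc l).symm
    have hcon : (∑ j ∈ Finset.range n, l' j) + t ≤ n + 1 := by
      rw [hsumcs]; omega
    have hall := stmt7_baseK (n + 1) n l' t hcon hsplitN
    have htone : t = 1 := by
      have hnt : ∑ i : Fin n, l i.castSucc = n * t := by
        rw [Finset.sum_congr rfl (fun i _ => show l i.castSucc = t by
          rw [← hl'eq i]; exact hall (i : ℕ) i.isLt)]
        rw [Finset.sum_const, Finset.card_univ, Fintype.card_fin, smul_eq_mul]
      have hmul : (n + 1) * t = n * t + t := by ring
      have h2 : (n + 1) * t = n + 1 := by omega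
      have := Nat.eq_of_mul_eq_mul_left (Nat.succ_pos n) (by rw [h2, mul_one] : (n+1) * t = (n+1) * 1)
      exact this
    intro i
    refine Fin.lastCases ?_ ?_ i
    · exact htone
    · intro j
      have hj := hall (j : ℕ) j.isLt
      rw [hl'eq j] at hj
      rw [hj, htone]
  -- positivity of nonzero combinations
  have hpos : ∀ m : Fin (n + 1) → ℕ, (∃ j, m j ≠ 0) → 0 < ∑ i, (m i : ℚ) * q i := by
    rintro m ⟨j, hj⟩
    refine Finset.sum_pos' (fun i _ => mul_nonneg (Nat.cast_nonneg _) (hq_pos i).le)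
      ⟨j, Finset.mem_univ j, mul_pos ?_ (hq_pos j)⟩
    exact_mod_cast Nat.pos_of_ne_zero hj
  have hzero : ∀ m : Fin (n + 1) → ℕ, (∑ i, (m i : ℚ) * q i) ≠ 0 → ∃ j, m j ≠ 0 := by
    intro m hm
    by_contra h
    push_neg at h
    exact hm (Finset.sum_eq_zero fun i _ => by rw [h i]; simp)
  -- no representation of an atom with at least two summands
  have hM2 : ∀ (m : Fin (n + 1) → ℕ) (j : Fin (n + 1)),
      (∑ i, (m i : ℚ) * q i) = q j → 2 ≤ ∑ i, m i → False := by
    intro m j hmj hM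
    have hqj : q j = (((p : ℤ) + c j : ℤ) : ℚ) / (((n + 1 : ℕ) : ℚ) * (p : ℚ)) := by
      rw [hq j]; push_cast; ring
    have h1 : ∑ i, (m i : ℤ) * ((p : ℤ) + c i) = (p : ℤ) + c j :=
      hclear m _ (by rw [hmj, hqj])
    have hbounds := stmt7_sum_bounds (fun i => (p : ℤ) + c i) ((p : ℤ) - B) ((p : ℤ) + B)
      (fun i => by have := hclb i; linarith)
      (fun i => by have := hcub i; linarith) m
    rw [h1] at hbounds
    obtain ⟨hlow, _⟩ := hbounds
    have h3 : (2 : ℤ) ≤ ((∑ i, m i : ℕ) : ℤ) := by exact_mod_cast hM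
    have h4 : (2 : ℤ) * ((p : ℤ) - B) ≤ ((∑ i, m i : ℕ) : ℤ) * ((p : ℤ) - B) :=
      mul_le_mul_of_nonneg_right h3 (by linarith)
    have hcj := hcub j
    -- p + c j < p + B and 2(p - B) ≤ p + c j give p < 3B ≤ (K+1)B < p
    have h5 : (3 : ℤ) * B ≤ (K + 1) * B := by
      have : (3 : ℤ) ≤ K + 1 := by linarith
      exact mul_le_mul_of_nonneg_right this (by linarith)
    linarith
  -- each q j is an atom
  have atom_mem : ∀ j, IsAtomOf (AddSubmonoid.closure (Set.range q)) (q j) := by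
    intro j
    refine ⟨AddSubmonoid.subset_closure (Set.mem_range_self j), (hq_pos j).ne', ?_⟩
    intro v hv w hw hv0 hw0 heq
    obtain ⟨m, hm⟩ := (stmt7_mem q v).mp hv
    obtain ⟨m', hm'⟩ := (stmt7_mem q w).mp hw
    have hmm : ∑ i, (((m + m') i : ℕ) : ℚ) * q i = q j := by
      have : ∑ i, (((m + m') i : ℕ) : ℚ) * q i
          = (∑ i, (m i : ℚ) * q i) + ∑ i, (m' i : ℚ) * q i := by
        rw [← Finset.sum_add_distrib]
        refine Finset.sum_congr rfl fun i _ => ?_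
        simp only [Pi.add_apply]
        push_cast
        ring
      rw [this, hm, hm', ← heq]
    have hM : 2 ≤ ∑ i, (m + m') i := by
      obtain ⟨j1, hj1⟩ := hzero m (by rw [hm]; exact hv0)
      obtain ⟨j2, hj2⟩ := hzero m' (by rw [hm']; exact hw0)
      have e : ∑ i, (m + m') i = (∑ i, m i) + ∑ i, m' i := by
        rw [← Finset.sum_add_distrib]; rfl
      have t1 : 1 ≤ ∑ i, m i :=
        le_trans (Nat.pos_of_ne_zero hj1) (Finset.single_le_sum (f := m)
          (fun i _ => Nat.zero_le _) (Finset.mem_univ j1))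
      have t2 : 1 ≤ ∑ i, m' i :=
        le_trans (Nat.pos_of_ne_zero hj2) (Finset.single_le_sum (f := m')
          (fun i _ => Nat.zero_le _) (Finset.mem_univ j2))
      omega
    exact hM2 (m + m') j hmm hM
  -- every atom is one of the q j
  have atom_sub : ∀ u, IsAtomOf (AddSubmonoid.closure (Set.range q)) u → u ∈ Set.range q := by
    rintro u ⟨huH, hu0, hdec⟩
    obtain ⟨m, hm⟩ := (stmt7_mem q u).mp huH
    obtain ⟨i₀, hi₀⟩ := hzero m (by rw [hm]; exact hu0)
    have hmi1 : 1 ≤ m i₀ := Nat.pos_of_ne_zero hi₀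
    by_cases hM : ∑ i, m i = 1
    · -- u = q i₀
      have hz : ∀ j, j ≠ i₀ → m j = 0 := by
        intro j hj
        by_contra hmj
        have h2 : m i₀ + m j ≤ ∑ i, m i := by
          have : ({i₀, j} : Finset (Fin (n+1))) ⊆ Finset.univ := Finset.subset_univ _
          calc m i₀ + m j = ∑ i ∈ ({i₀, j} : Finset (Fin (n+1))), m i := by
                rw [Finset.sum_insert (by simp [Ne.symm hj]), Finset.sum_singleton]
            _ ≤ ∑ i, m i := Finset.sum_le_sum_of_subset this
        have := Nat.pos_of_ne_zero hmj
        omega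
      refine ⟨i₀, ?_⟩
      rw [← hm, Finset.sum_eq_single i₀ (fun j _ hj => by rw [hz j hj]; simp)
        (fun h => absurd (Finset.mem_univ i₀) h)]
      have : m i₀ = 1 := by
        have := Finset.sum_eq_single (M := ℕ) i₀ (fun j (_ : j ∈ Finset.univ) hj => hz j hj)
          (fun h => absurd (Finset.mem_univ i₀) h) (f := m)
        omega
      rw [this]
      simp
    · -- ∑ m ≥ 2 : decompose u, contradiction with atomicity
      have hM2' : 2 ≤ ∑ i, m i := by
        have : 1 ≤ ∑ i, m i :=
          le_trans hmi1 (Finset.single_le_sum (f := m) (fun i _ => Nat.zero_le _)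
            (Finset.mem_univ i₀))
        omega
      set m' : Fin (n + 1) → ℕ := fun i => if i = i₀ then m i - 1 else m i with hm'def
      have hsplitm : ∀ i, (m i : ℚ) = (if i = i₀ then (1 : ℚ) else 0) + (m' i : ℚ) := by
        intro i
        by_cases h : i = i₀
        · subst h
          simp only [hm'def, eq_self_iff_true, if_true]
          rw [Nat.cast_sub hmi1]
          push_cast
          ring
        · simp [hm'def, h]
      have hdecomp : u = q i₀ + ∑ i, (m' i : ℚ) * q i := by
        rw [← hm,
          Finset.sum_congr rfl (fun i _ => by rw [hsplitm i, add_mul]),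
          Finset.sum_add_distrib]
        congr 1
        simp only [ite_mul, one_mul, zero_mul]
        rw [Finset.sum_ite_eq' Finset.univ i₀ q]
        simp
      have hm'ex : ∃ j, m' j ≠ 0 := by
        by_contra h
        push_neg at h
        have h1 : m i₀ = 1 := by
          have := h i₀
          simp only [hm'def, eq_self_iff_true, if_true] at this
          omega
        have h0 : ∀ j, j ≠ i₀ → m j = 0 := by
          intro j hj
          have := h j
          simp only [hm'def, if_neg hj] at this
          exact this
        have : ∑ i, m i = 1 := by
          rw [Finset.sum_eq_single i₀ (fun j _ hj => h0 j hj)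
            (fun hh => absurd (Finset.mem_univ i₀) hh), h1]
        omega
      have hw0 : (0 : ℚ) < ∑ i, (m' i : ℚ) * q i := hpos m' hm'ex
      exact absurd hdecomp (hdec (q i₀) (AddSubmonoid.subset_closure (Set.mem_range_self i₀))
        (∑ i, (m' i : ℚ) * q i) ((stmt7_mem q _).mpr ⟨m', rfl⟩)
        (hq_pos i₀).ne' hw0.ne')
  have part1 : {u | IsAtomOf (AddSubmonoid.closure (Set.range q)) u} = Set.range q := by
    ext u
    exact ⟨fun h => atom_sub u h, by rintro ⟨j, rfl⟩; exact atom_mem j⟩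
  have part3 : ∀ z, IsFactorizationOf (AddSubmonoid.closure (Set.range q)) 1 z ↔
      z = Multiset.map q Finset.univ.val := by
    intro z
    constructor
    · rintro ⟨hz1, hz2⟩
      obtain ⟨w, rfl⟩ := stmt7_exists_map q z (fun x hx => atom_sub x (hz1 x hx))
      have hsum : ∑ i, ((w.count i : ℕ) : ℚ) * q i = 1 := by
        rw [← stmt7_map_sum q w]
        exact hz2
      have hcnt := key2 (fun i => w.count i) hsum
      have hw : w = Finset.univ.val := by
        refine Multiset.ext.mpr fun a => ?_
        exact (hcnt a).trans (Multiset.count_eq_one_of_mem Finset.univ.nodup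
          (Finset.mem_univ a)).symm
      rw [hw]
    · rintro rfl
      constructor
      · intro x hx
        obtain ⟨i, _, rfl⟩ := Multiset.mem_map.mp hx
        exact atom_mem i
      · rw [stmt7_map_sum q Finset.univ.val]
        rw [Finset.sum_congr rfl fun i (_ : i ∈ Finset.univ) => by
          rw [Multiset.count_eq_one_of_mem Finset.univ.nodup (Finset.mem_univ i)]]
        simpa using hqsum
  refine ⟨part1, key2, part3, ?_⟩
  ext N
  simp only [Set.mem_setOf_eq, Set.mem_singleton_iff]
  constructor
  · rintro ⟨z, hz, rfl⟩
    rw [part3 z] at hz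
    subst hz
    simp [Multiset.card_map]
  · rintro rfl
    exact ⟨Multiset.map q Finset.univ.val, (part3 _).mpr rfl, by simp [Multiset.card_map]⟩
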